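/- Every positive definite binary quadratic form with real coefficients can be reduced by a unimodular change of variables: for every positive definite Q(x,y) = Ax² + Bxy + Cy² there exists γ = [[a,b],[c,d]] ∈ SL(2,ℤ) such that, writing Q(ax+cy, bx+dy) = A'x² + B'xy + C'y², the coefficients satisfy |B'| ≤ A' ≤ C'. -/

import Mathlib

open scoped MatrixGroups Modular
open UpperHalfPlane

/-- Every positive definite binary quadratic form can be reduced by a unimodular change
of variables: there is `γ = [[a,b],[c,d]] ∈ SL(2,ℤ)` so that writing
`Q(ax+cy, bx+dy) = A'x² + B'xy + C'y²` one has `|B'| ≤ A' ≤ C'`. -/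
theorem stmt_6 (A B C : ℝ)
    (hpd : ∀ x y : ℝ, (x, y) ≠ (0, 0) → 0 < A * x ^ 2 + B * x * y + C * y ^ 2) :
    ∃ γ : SL(2, ℤ), ∃ A' B' C' : ℝ,
      (∀ x y : ℝ,
        A * (((γ : Matrix (Fin 2) (Fin 2) ℤ) 0 0 : ℝ) * x
              + ((γ : Matrix (Fin 2) (Fin 2) ℤ) 1 0 : ℝ) * y) ^ 2
          + B * (((γ : Matrix (Fin 2) (Fin 2) ℤ) 0 0 : ℝ) * x
              + ((γ : Matrix (Fin 2) (Fin 2) ℤ) 1 0 : ℝ) * y)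
              * (((γ : Matrix (Fin 2) (Fin 2) ℤ) 0 1 : ℝ) * x
              + ((γ : Matrix (Fin 2) (Fin 2) ℤ) 1 1 : ℝ) * y)
          + C * (((γ : Matrix (Fin 2) (Fin 2) ℤ) 0 1 : ℝ) * x
              + ((γ : Matrix (Fin 2) (Fin 2) ℤ) 1 1 : ℝ) * y) ^ 2
        = A' * x ^ 2 + B' * x * y + C' * y ^ 2) ∧
      |B'| ≤ A' ∧ A' ≤ C' := by
  have hA : 0 < A := by simpa using hpd 1 0 (by norm_num)
  have hdisc : 0 < 4 * A * C - B ^ 2 := by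
    have h := hpd (-B) (2 * A) (by simp [Prod.ext_iff]; intro _; nlinarith)
    nlinarith
  set u : ℝ := -B / (2 * A) with hu
  set v : ℝ := Real.sqrt (4 * A * C - B ^ 2) / (2 * A) with hvdef
  have hv : 0 < v := div_pos (Real.sqrt_pos.mpr hdisc) (by linarith)
  have hv2 : v ^ 2 = (4 * A * C - B ^ 2) / (4 * A ^ 2) := by
    rw [hvdef, div_pow, Real.sq_sqrt hdisc.le]; ring_nf
  have hB : B = -(2 * A) * u := by rw [hu]; field_simp
  have hC : C = A * (u ^ 2 + v ^ 2) := by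
    rw [hv2, hu]; field_simp; ring
  set z : ℍ := ⟨⟨u, v⟩, hv⟩ with hz
  obtain ⟨g, hg1, hg2⟩ := ModularGroup.exists_smul_mem_fd z
  set p : ℝ := ((g : Matrix (Fin 2) (Fin 2) ℤ) 0 0 : ℝ) with hp
  set q : ℝ := ((g : Matrix (Fin 2) (Fin 2) ℤ) 0 1 : ℝ) with hq
  set r : ℝ := ((g : Matrix (Fin 2) (Fin 2) ℤ) 1 0 : ℝ) with hr
  set s : ℝ := ((g : Matrix (Fin 2) (Fin 2) ℤ) 1 1 : ℝ) with hs
  have hd := denom_ne_zero (g : GL(2, ℝ)⁺) z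
  have h1 : ((g • z : ℍ) : ℂ) = num (g : GL(2, ℝ)⁺) z / denom (g : GL(2, ℝ)⁺) z := by
    rw [ModularGroup.sl_moeb]; exact UpperHalfPlane.coe_smul_of_det_pos (by simp) _
  have key : ((g • z : ℍ) : ℂ) * ((r : ℂ) * (z : ℂ) + s) = (p : ℂ) * (z : ℂ) + q := by
    rw [h1, div_mul_eq_mul_div, div_eq_iff hd]
    congr 1
  set α : ℝ := (g • z).re with hα
  set β : ℝ := (g • z).im with hβ
  have hβpos : 0 < β := (g • z).im_pos
  have hre : α * (r * u + s) - β * (r * v) = p * u + q := by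
    have := congrArg Complex.re key
    simpa [Complex.ext_iff, UpperHalfPlane.coe_re, UpperHalfPlane.coe_im, hz, -ModularGroup.sl_moeb] using this
  have him : α * (r * v) + β * (r * u + s) = p * v := by
    have := congrArg Complex.im key
    simpa [Complex.ext_iff, UpperHalfPlane.coe_re, UpperHalfPlane.coe_im, hz, -ModularGroup.sl_moeb] using this
  have hdet : p * s - q * r = 1 := by
    have h := g.property
    rw [Matrix.det_fin_two] at h
    rw [hp, hq, hr, hs]
    exact_mod_cast congrArg (Int.cast : ℤ → ℝ) h
  set N : ℝ := (r * u + s) ^ 2 + (r * v) ^ 2 with hN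
  have hβN : β * N = v := by
    linear_combination (r * u + s) * him - (r * v) * hre + v * hdet + β * hN
  have hαN : α * N = (p * u + q) * (r * u + s) + p * r * v ^ 2 := by
    linear_combination (r * u + s) * hre + (r * v) * him + α * hN
  have hNpos : 0 < N := by nlinarith [hβN, hv, hβpos]
  have hC'rel : N * (α ^ 2 + β ^ 2) = (p * u + q) ^ 2 + (p * v) ^ 2 := by
    apply mul_left_cancel₀ hNpos.ne'
    calc N * (N * (α ^ 2 + β ^ 2)) = (α * N) ^ 2 + (β * N) ^ 2 := by ring
    _ = ((p * u + q) * (r * u + s) + p * r * v ^ 2) ^ 2 + (v * (p * s - q * r)) ^ 2 := by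
        rw [hαN, hβN, hdet]; ring
    _ = N * ((p * u + q) ^ 2 + (p * v) ^ 2) := by rw [hN]; ring
  clear_value α β N u v p q r s z
  clear hd h1 key hre him hpd hu hvdef hv2 hdisc hv hz
  -- the reduced coefficients
  refine ⟨⟨!![(g 1 1 : ℤ), -(g 1 0 : ℤ); -(g 0 1 : ℤ), (g 0 0 : ℤ)], by
      have h := g.property
      rw [Matrix.det_fin_two] at h ⊢
      simp only [Matrix.cons_val', Matrix.cons_val_zero, Matrix.cons_val_one, Matrix.head_cons,
        Matrix.empty_val', Matrix.cons_val_fin_one, Matrix.head_fin_const, Matrix.of_apply]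
      linarith⟩, A * N, -(2 * A) * (α * N), A * (N * (α ^ 2 + β ^ 2)), ?_, ?_, ?_⟩
  · intro x y
    simp only [Matrix.SpecialLinearGroup.coe_mk, Matrix.cons_val', Matrix.cons_val_zero,
      Matrix.cons_val_one, Matrix.head_cons, Matrix.empty_val', Matrix.cons_val_fin_one,
      Matrix.head_fin_const, Matrix.of_apply, Int.cast_neg]
    rw [← hp, ← hq, ← hr, ← hs]
    have e1 : A * s ^ 2 - B * s * r + C * r ^ 2 = A * N := by
      rw [hB, hC, hN]; ring
    have e2 : -(2 * A) * s * q + B * (s * p + r * q) - 2 * C * r * p = -(2 * A) * (α * N) := by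
      rw [hB, hC, hαN]; ring
    have e3 : A * q ^ 2 - B * q * p + C * p ^ 2 = A * (N * (α ^ 2 + β ^ 2)) := by
      rw [hB, hC, hC'rel]; ring
    linear_combination x ^ 2 * e1 + x * y * e2 + y ^ 2 * e3
  · rw [abs_le]
    rw [abs_le] at hg2
    have hAN : 0 < A * N := mul_pos hA hNpos
    constructor
    · have h := mul_nonneg hAN.le (by linarith [hg2.2] : (0:ℝ) ≤ 1 - 2 * α)
      linarith [h]
    · have h := mul_nonneg hAN.le (by linarith [hg2.1] : (0:ℝ) ≤ 1 + 2 * α)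
      linarith [h]
  · have h1' : 1 ≤ α ^ 2 + β ^ 2 := by
      have hns : Complex.normSq ((g • z : ℍ) : ℂ) = α ^ 2 + β ^ 2 := by
        rw [Complex.normSq_apply, UpperHalfPlane.coe_re, UpperHalfPlane.coe_im, ← hα, ← hβ]; ring
      linarith [hns ▸ hg1]
    have hAN : 0 < A * N := mul_pos hA hNpos
    have h := mul_nonneg hAN.le (by linarith : (0:ℝ) ≤ α ^ 2 + β ^ 2 - 1)
    linarith [h]
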